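/- Let ω be any nonempty finite word and let ε > 0 satisfy ε ≤ R r_ω. Then the ε-parallel set of the cylinder set S_ω(F) decomposes as (S_ω F)_ε = ⋃_{σ̃ ∈ Σ(ε/r_ω)} (S_ω(S_σ̃(F)))_ε. -/

import Mathlib

open Set Metric

/-- The contraction ratio `r_ω` of a finite word `ω` over the alphabet `Fin N`. -/
def rword {N : ℕ} (r : Fin N → ℝ) (ω : List (Fin N)) : ℝ := (ω.map r).prod

/-- The family `Σ(ε)` of all nonempty words `ω` with `R r_ω < ε ≤ R r_{ω|(|ω|-1)}`. -/
def SigmaW {N : ℕ} (r : Fin N → ℝ) (R ε : ℝ) : Set (List (Fin N)) :=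
  {ω | ω ≠ [] ∧ R * rword r ω < ε ∧ ε ≤ R * rword r (ω.take (ω.length - 1))}

/-- The composed map `S_ω = S_{ω₁} ∘ ⋯ ∘ S_{ωₙ}` for a word `ω = ω₁…ωₙ`. -/
def Sword {N : ℕ} {E : Type*} (S : Fin N → E → E) (ω : List (Fin N)) : E → E :=
  ω.foldr (fun i f => S i ∘ f) id

lemma rword_append {N : ℕ} (r : Fin N → ℝ) (a b : List (Fin N)) :
    rword r (a ++ b) = rword r a * rword r b := by
  simp [rword]

lemma rword_pos {N : ℕ} {r : Fin N → ℝ} (hr : ∀ i, r i ∈ Set.Ioo (0 : ℝ) 1)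
    (ω : List (Fin N)) : 0 < rword r ω := by
  induction ω with
  | nil => simp [rword]
  | cons i t ih =>
    have : rword r (i :: t) = r i * rword r t := by simp [rword]
    rw [this]
    exact mul_pos (hr i).1 ih

lemma sword_cons {N : ℕ} {E : Type*} (S : Fin N → E → E) (i : Fin N) (t : List (Fin N)) :
    Sword S (i :: t) = S i ∘ Sword S t := rfl

lemma sword_append {N : ℕ} {E : Type*} (S : Fin N → E → E) (a b : List (Fin N)) :
    Sword S (a ++ b) = Sword S a ∘ Sword S b := by
  induction a with
  | nil => rfl
  | cons i t ih => simp [sword_cons, List.cons_append, ih, Function.comp_assoc]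

lemma sword_image_subset {N d : ℕ}
    (S : Fin N → EuclideanSpace ℝ (Fin d) → EuclideanSpace ℝ (Fin d))
    (F : Set (EuclideanSpace ℝ (Fin d))) (hF : F = ⋃ i, S i '' F)
    (σ : List (Fin N)) : Sword S σ '' F ⊆ F := by
  induction σ with
  | nil => simp [Sword]
  | cons i t ih =>
    rw [sword_cons, Set.image_comp]
    refine (Set.image_mono (f := S i) ih).trans ?_
    nth_rewrite 2 [hF]
    exact Set.subset_iUnion (fun j => S j '' F) i

/-- Covering lemma: every point of `F` lies in some cylinder `S_σ(F)` with `σ ∈ Σ(δ)`. -/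
lemma cover_lemma {N d : ℕ} (hN : 2 ≤ N) {r : Fin N → ℝ}
    (hr : ∀ i, r i ∈ Set.Ioo (0 : ℝ) 1) {R : ℝ} (hR : 0 < R)
    (S : Fin N → EuclideanSpace ℝ (Fin d) → EuclideanSpace ℝ (Fin d))
    (F : Set (EuclideanSpace ℝ (Fin d))) (hF : F = ⋃ i, S i '' F)
    {δ : ℝ} (hδ : 0 < δ) (hδR : δ ≤ R) {z : EuclideanSpace ℝ (Fin d)} (hz : z ∈ F) :
    ∃ σ ∈ SigmaW r R δ, z ∈ Sword S σ '' F := by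
  -- choice of decompositions
  have step : ∀ x : F, ∃ p : Fin N × F, (x : EuclideanSpace ℝ (Fin d)) = S p.1 p.2 := by
    rintro ⟨x, hx⟩
    rw [hF] at hx
    obtain ⟨i, y, hy, hyx⟩ := Set.mem_iUnion.mp hx
    exact ⟨⟨i, ⟨y, hy⟩⟩, hyx.symm⟩
  choose st hst using step
  set g : ℕ → F := fun k => (fun x => (st x).2)^[k] ⟨z, hz⟩ with hg
  set idx : ℕ → Fin N := fun k => (st (g k)).1 with hidx
  set w : ℕ → List (Fin N) := fun k => (List.range k).map idx with hw
  have hwlen : ∀ k, (w k).length = k := by intro k; simp [hw]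
  have hgsucc : ∀ k, (g (k + 1) : EuclideanSpace ℝ (Fin d)) = (st (g k)).2 := by
    intro k; simp [hg, Function.iterate_succ_apply']
  have hwsucc : ∀ k, w (k + 1) = w k ++ [idx k] := by
    intro k; simp [hw, List.range_succ]
  have key : ∀ k, z = Sword S (w k) (g k) := by
    intro k
    induction k with
    | zero => simp [hw, Sword, hg]
    | succ k ih =>
      rw [hwsucc, sword_append]
      have : (Sword S [idx k]) (g (k + 1)) = (g k : EuclideanSpace ℝ (Fin d)) := by
        have := hst (g k)
        simp only [Sword, List.foldr]
        rw [hgsucc]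
        exact this.symm
      simp only [Function.comp_apply, this]
      exact ih
  -- contraction bound
  haveI : Nonempty (Fin N) := ⟨⟨0, by omega⟩⟩
  set i0 : Fin N := ⟨0, by omega⟩ with hi0
  set c : ℝ := Finset.univ.sup' (Finset.univ_nonempty) r with hc
  have hc1 : c < 1 := by
    rw [hc, Finset.sup'_lt_iff]
    exact fun i _ => (hr i).2
  have hc0 : 0 ≤ c := le_trans (hr i0).1.le (Finset.le_sup' r (Finset.mem_univ i0))
  have hrc : ∀ i, r i ≤ c := fun i => Finset.le_sup' r (Finset.mem_univ i)
  have hbound : ∀ k, rword r (w k) ≤ c ^ k := by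
    intro k
    induction k with
    | zero => simp [hw, rword]
    | succ k ih =>
      rw [hwsucc, rword_append, pow_succ]
      have h1 : rword r [idx k] = r (idx k) := by simp [rword]
      rw [h1]
      exact mul_le_mul ih (hrc _) (hr _).1.le (by positivity)
  have hexists : ∃ k, R * rword r (w k) < δ := by
    obtain ⟨k, hk⟩ := exists_pow_lt_of_lt_one (div_pos hδ hR) hc1
    refine ⟨k, ?_⟩
    have : rword r (w k) < δ / R := lt_of_le_of_lt (hbound k) hk
    calc R * rword r (w k) < R * (δ / R) := by
          exact (mul_lt_mul_iff_right₀ hR).mpr this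
      _ = δ := by field_simp
  set k := Nat.find hexists with hkdef
  have hk : R * rword r (w k) < δ := Nat.find_spec hexists
  have hk0 : k ≠ 0 := by
    intro h
    have : R * rword r (w 0) < δ := by rw [← h]; exact hk
    simp [hw, rword] at this
    linarith
  have hmin : ¬ R * rword r (w (k - 1)) < δ := Nat.find_min hexists (by omega)
  refine ⟨w k, ⟨?_, ?_, ?_⟩, g k, (g k).2, (key k).symm⟩
  · intro h
    have := hwlen k
    rw [h] at this
    simp at this
    omega
  · exact hk
  · rw [hwlen]
    have htake : (w k).take (k - 1) = w (k - 1) := by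
      simp [hw, ← List.map_take, List.take_range]
    rw [htake]
    linarith [not_lt.mp hmin]

lemma sword_continuous {N d : ℕ} {r : Fin N → ℝ}
    (S : Fin N → EuclideanSpace ℝ (Fin d) → EuclideanSpace ℝ (Fin d))
    (hr : ∀ i, r i ∈ Set.Ioo (0 : ℝ) 1)
    (hSdist : ∀ i x y, dist (S i x) (S i y) = r i * dist x y)
    (ω : List (Fin N)) : Continuous (Sword S ω) := by
  induction ω with
  | nil => exact continuous_id
  | cons i t ih =>
    rw [sword_cons]
    have hlip : LipschitzWith (Real.toNNReal (r i)) (S i) := by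
      apply LipschitzWith.of_dist_le_mul
      intro x y
      rw [hSdist]
      gcongr
      exact Real.le_coe_toNNReal (r i)
    exact hlip.continuous.comp ih

/-- For a nonempty word `ω` and `0 < ε ≤ R r_ω`, the `ε`-parallel set of the cylinder
set `S_ω(F)` decomposes as `(S_ω F)_ε = ⋃_{σ̃ ∈ Σ(ε/r_ω)} (S_ω(S_σ̃(F)))_ε`. -/
theorem stmt5 {d N : ℕ} (hN : 2 ≤ N) (r : Fin N → ℝ)
    (hr : ∀ i, r i ∈ Set.Ioo (0 : ℝ) 1) (D : ℝ) (hD0 : 0 ≤ D)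
    (hD : ∑ i, r i ^ D = 1) (R : ℝ) (hR : 0 < R)
    (S : Fin N → EuclideanSpace ℝ (Fin d) → EuclideanSpace ℝ (Fin d))
    (hSsurj : ∀ i, Function.Surjective (S i))
    (hSdist : ∀ i x y, dist (S i x) (S i y) = r i * dist x y)
    (F : Set (EuclideanSpace ℝ (Fin d))) (hFne : F.Nonempty) (hFcpt : IsCompact F)
    (hF : F = ⋃ i, S i '' F)
    (ω : List (Fin N)) (hω : ω ≠ [])
    (ε : ℝ) (hε : 0 < ε) (hεω : ε ≤ R * rword r ω) :
    cthickening ε (Sword S ω '' F) =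
      ⋃ σt ∈ SigmaW r R (ε / rword r ω),
        cthickening ε (Sword S ω '' (Sword S σt '' F)) := by
  have hrω : 0 < rword r ω := rword_pos hr ω
  have hδ : 0 < ε / rword r ω := div_pos hε hrω
  have hδR : ε / rword r ω ≤ R := (div_le_iff₀ hrω).mpr (by linarith)
  apply Set.Subset.antisymm
  · intro x hx
    -- realize the distance on the compact set
    have hKcpt : IsCompact (Sword S ω '' F) :=
      hFcpt.image (sword_continuous S hr hSdist ω)
    have hKne : (Sword S ω '' F).Nonempty := hFne.image _
    have hinf : infDist x (Sword S ω '' F) ≤ ε := by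
      rw [mem_cthickening_iff] at hx
      exact ENNReal.toReal_le_of_le_ofReal hε.le hx
    obtain ⟨y, hy, hxy⟩ := hKcpt.exists_infDist_eq_dist hKne x
    have hdist : dist x y ≤ ε := by rw [← hxy]; exact hinf
    obtain ⟨z, hz, rfl⟩ := hy
    obtain ⟨σ, hσ, hzσ⟩ := cover_lemma hN hr hR S F hF hδ hδR hz
    refine Set.mem_iUnion₂.mpr ⟨σ, hσ, ?_⟩
    exact mem_cthickening_of_dist_le x (Sword S ω z) ε _
      (Set.mem_image_of_mem _ hzσ) hdist
  · refine Set.iUnion₂_subset fun σ hσ => ?_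
    apply cthickening_subset_of_subset
    exact Set.image_mono (sword_image_subset S F hF σ)
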